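/- Let L : C[a,b] → B[a,b] be a positive linear operator and g ∈ C[a,b]. Then for every x ∈ [a,b] and δ > 0: |L(g)(x) − g(x)| ≤ |g(x)|·|L(1)(x) − 1| + ω(g;δ)·(1 + |L(1)(x) − 1|) + (ω(g;δ)/δ²)·L((s − x)²)(x), where L acts in the variable s. -/

import Mathlib

/-- The modulus of continuity of a continuous function on `[a,b]`. -/
noncomputable def modCont {a b : ℝ} (g : C(Set.Icc a b, ℝ)) (δ : ℝ) : ℝ :=
  sSup {d | ∃ s x : Set.Icc a b, |(s : ℝ) - (x : ℝ)| ≤ δ ∧ d = |g s - g x|}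

lemma modCont_bdd {a b : ℝ} (g : C(Set.Icc a b, ℝ)) (δ : ℝ) :
    BddAbove {d | ∃ s x : Set.Icc a b, |(s : ℝ) - (x : ℝ)| ≤ δ ∧ d = |g s - g x|} := by
  refine ⟨2 * ‖g‖, ?_⟩
  rintro d ⟨s, x, -, rfl⟩
  have h1 : |g s| ≤ ‖g‖ := g.norm_coe_le_norm s
  have h2 : |g x| ≤ ‖g‖ := g.norm_coe_le_norm x
  have := abs_sub (g s) (g x)
  linarith [abs_sub_abs_le_abs_sub (g s) (g x), abs_sub (g s) (g x)]

lemma le_modCont {a b : ℝ} (g : C(Set.Icc a b, ℝ)) {δ : ℝ} {s x : Set.Icc a b}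
    (h : |(s : ℝ) - (x : ℝ)| ≤ δ) : |g s - g x| ≤ modCont g δ :=
  le_csSup (modCont_bdd g δ) ⟨s, x, h, rfl⟩

lemma modCont_nonneg {a b : ℝ} (hab : a ≤ b) (g : C(Set.Icc a b, ℝ)) {δ : ℝ} (hδ : 0 ≤ δ) :
    0 ≤ modCont g δ := by
  have x : Set.Icc a b := ⟨a, le_refl a, hab⟩
  have : |g x - g x| ≤ modCont g δ := le_modCont g (by simp [hδ])
  simpa using this

lemma key_estimate {a b : ℝ} (hab : a ≤ b) (g : C(Set.Icc a b, ℝ)) {δ : ℝ} (hδ : 0 < δ)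
    (s x : Set.Icc a b) :
    |g s - g x| ≤ modCont g δ * (1 + ((s : ℝ) - (x : ℝ)) ^ 2 / δ ^ 2) := by
  have hω := modCont_nonneg hab g hδ.le
  by_cases hsd : |(s : ℝ) - (x : ℝ)| ≤ δ
  · have h1 := le_modCont g hsd
    have h2 : 0 ≤ ((s : ℝ) - (x : ℝ)) ^ 2 / δ ^ 2 := by positivity
    nlinarith
  push_neg at hsd
  set r : ℝ := |(s : ℝ) - (x : ℝ)| / δ with hr
  have hr1 : 1 < r := (one_lt_div hδ).mpr hsd
  set n : ℕ := ⌈r⌉₊ with hn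
  have hn1 : 1 ≤ n := Nat.ceil_pos.mpr (by linarith)
  have hnpos : (0 : ℝ) < n := by exact_mod_cast hn1
  have hrn : r ≤ n := Nat.le_ceil r
  have hstep : |(s : ℝ) - (x : ℝ)| / n ≤ δ := by
    rw [div_le_iff₀ hnpos]
    have hrd : |(s : ℝ) - (x : ℝ)| = r * δ := by rw [hr]; field_simp
    nlinarith
  -- chaining points
  have hmem : ∀ k : ℕ, (x : ℝ) + (min k n : ℝ) / n * ((s : ℝ) - (x : ℝ)) ∈ Set.Icc a b := by
    intro k
    have hc0 : (0 : ℝ) ≤ (min k n : ℝ) / n := by positivity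
    have hc1 : (min k n : ℝ) / n ≤ 1 := by
      rw [div_le_one hnpos]; exact_mod_cast Nat.min_le_right k n
    obtain ⟨hxa, hxb⟩ := x.2
    obtain ⟨hsa, hsb⟩ := s.2
    constructor <;> nlinarith
  set f : ℕ → ℝ := fun k => g ⟨(x : ℝ) + (min k n : ℝ) / n * ((s : ℝ) - (x : ℝ)), hmem k⟩
    with hf
  have hf0 : f 0 = g x := by
    simp only [hf]
    congr 1
    ext
    simp
  have hfn : f n = g s := by
    simp only [hf]
    congr 1
    ext
    field_simp
    rw [min_self]; ring
  have htel : g s - g x = ∑ k ∈ Finset.range n, (f (k + 1) - f k) := by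
    rw [Finset.sum_range_sub f, hf0, hfn]
  have hterm : ∀ k ∈ Finset.range n, |f (k + 1) - f k| ≤ modCont g δ := by
    intro k hk
    apply le_modCont
    push_cast
    have hk' : (k : ℝ) + 1 ≤ (n : ℝ) := by exact_mod_cast Finset.mem_range.mp hk
    have e1 : ((k : ℝ) + 1) ⊓ (n : ℝ) = (k : ℝ) + 1 := min_eq_left hk'
    have e2 : (k : ℝ) ⊓ (n : ℝ) = (k : ℝ) := min_eq_left (by linarith)
    rw [e1, e2]
    have heq : (x : ℝ) + ((k : ℝ) + 1) / n * ((s : ℝ) - (x : ℝ)) -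
        ((x : ℝ) + (k : ℝ) / n * ((s : ℝ) - (x : ℝ))) = ((s : ℝ) - (x : ℝ)) / n := by
      field_simp
      ring
    rw [heq, abs_div, abs_of_pos hnpos]
    exact hstep
  have habs : |g s - g x| ≤ n * modCont g δ := by
    rw [htel]
    calc |∑ k ∈ Finset.range n, (f (k + 1) - f k)|
        ≤ ∑ k ∈ Finset.range n, |f (k + 1) - f k| := Finset.abs_sum_le_sum_abs _ _
      _ ≤ ∑ k ∈ Finset.range n, modCont g δ := Finset.sum_le_sum hterm
      _ = n * modCont g δ := by simp [mul_comm]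
  have hnle : (n : ℝ) ≤ 1 + ((s : ℝ) - (x : ℝ)) ^ 2 / δ ^ 2 := by
    have h1 : (n : ℝ) < r + 1 := Nat.ceil_lt_add_one (by positivity)
    have h2 : r ≤ ((s : ℝ) - (x : ℝ)) ^ 2 / δ ^ 2 := by
      have : ((s : ℝ) - (x : ℝ)) ^ 2 = |(s : ℝ) - (x : ℝ)| ^ 2 := (sq_abs _).symm
      rw [this, hr]
      rw [div_le_div_iff₀ hδ (by positivity)]
      nlinarith [mul_pos hδ (sub_pos.mpr hsd), abs_nonneg ((s:ℝ)-(x:ℝ))]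
    linarith
  calc |g s - g x| ≤ n * modCont g δ := habs
    _ ≤ (1 + ((s : ℝ) - (x : ℝ)) ^ 2 / δ ^ 2) * modCont g δ := by nlinarith
    _ = modCont g δ * (1 + ((s : ℝ) - (x : ℝ)) ^ 2 / δ ^ 2) := mul_comm _ _

/-- Pointwise Korovkin-type estimate for a positive linear operator. -/
theorem stmt6 {a b : ℝ} (hab : a ≤ b)
    (L : C(Set.Icc a b, ℝ) →ₗ[ℝ] (Set.Icc a b → ℝ))
    (hL : ∀ f : C(Set.Icc a b, ℝ), (∀ t, 0 ≤ f t) → ∀ t, 0 ≤ L f t)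
    (g : C(Set.Icc a b, ℝ)) (x : Set.Icc a b) (δ : ℝ) (hδ : 0 < δ) :
    |L g x - g x| ≤
      |g x| * |L 1 x - 1| + modCont g δ * (1 + |L 1 x - 1|) +
        modCont g δ / δ ^ 2 *
          L (ContinuousMap.mk (fun s : Set.Icc a b => ((s : ℝ) - (x : ℝ)) ^ 2)
              (by fun_prop)) x := by
  set φ : C(Set.Icc a b, ℝ) := ContinuousMap.mk (fun s : Set.Icc a b => ((s : ℝ) - (x : ℝ)) ^ 2)
      (by fun_prop) with hφ
  set ω := modCont g δ with hω
  have hω0 : 0 ≤ ω := modCont_nonneg hab g hδ.le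
  -- monotonicity of L
  have hmono : ∀ f h : C(Set.Icc a b, ℝ), (∀ t, f t ≤ h t) → ∀ t, L f t ≤ L h t := by
    intro f h hfh t
    have := hL (h - f) (fun u => by simpa [sub_nonneg] using hfh u) t
    rw [map_sub] at this
    have : 0 ≤ L h t - L f t := this
    linarith
  set H : C(Set.Icc a b, ℝ) := ω • ((1 : C(Set.Icc a b, ℝ)) + (δ ^ 2)⁻¹ • φ) with hH
  set f : C(Set.Icc a b, ℝ) := g - (g x) • (1 : C(Set.Icc a b, ℝ)) with hfdef
  have hkey : ∀ t : Set.Icc a b, |f t| ≤ H t := by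
    intro t
    have hke := key_estimate hab g hδ t x
    have hft : f t = g t - g x := by simp [hfdef]
    have hHt : H t = ω * (1 + ((t : ℝ) - (x : ℝ)) ^ 2 / δ ^ 2) := by
      simp [hH, hφ, div_eq_mul_inv]
      ring
    rw [hft, hHt]
    exact hke
  have hupper : ∀ t, f t ≤ H t := fun t => (abs_le.mp (hkey t)).2
  have hlower : ∀ t, (-H) t ≤ f t := fun t => by
    simpa using (abs_le.mp (hkey t)).1
  have hLf : |L f x| ≤ L H x := by
    rw [abs_le]
    constructor
    · have := hmono (-H) f hlower x
      rw [map_neg] at this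
      simpa using this
    · exact hmono f H hupper x
  have hLfval : L f x = L g x - g x * L 1 x := by
    rw [hfdef, map_sub, map_smul]
    simp
  have hLHval : L H x = ω * (L 1 x + (δ ^ 2)⁻¹ * L φ x) := by
    rw [hH, map_smul, map_add, map_smul]
    simp
  have hφpos : 0 ≤ L φ x := hL φ (fun t => by simp [hφ]; positivity) x
  have h1 : L 1 x ≤ 1 + |L 1 x - 1| := by
    have := le_abs_self (L 1 x - 1); linarith
  have h2 : |L g x - g x| ≤ |L f x| + |g x| * |L 1 x - 1| := by
    have : L g x - g x = L f x + g x * (L 1 x - 1) := by rw [hLfval]; ring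
    rw [this]
    calc |L f x + g x * (L 1 x - 1)| ≤ |L f x| + |g x * (L 1 x - 1)| := abs_add_le _ _
      _ = |L f x| + |g x| * |L 1 x - 1| := by rw [abs_mul]
  have h3 : |L f x| ≤ ω * (L 1 x + (δ ^ 2)⁻¹ * L φ x) := hLHval ▸ hLf
  have hδ2 : (0:ℝ) < δ ^ 2 := by positivity
  calc |L g x - g x| ≤ |L f x| + |g x| * |L 1 x - 1| := h2
    _ ≤ ω * (L 1 x + (δ ^ 2)⁻¹ * L φ x) + |g x| * |L 1 x - 1| := by linarith
    _ ≤ |g x| * |L 1 x - 1| + ω * (1 + |L 1 x - 1|) + ω / δ ^ 2 * L φ x := by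
        rw [div_eq_mul_inv]
        nlinarith [mul_le_mul_of_nonneg_left h1 hω0,
          mul_nonneg (mul_nonneg hω0 (inv_nonneg.mpr hδ2.le)) hφpos]
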